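/- arXiv:1411.4177 — 5 statements merged into one kernel-verified Lean document; each statement's English description precedes it below -/
import Mathlib

section
/- Let G be the Klein four-group (ℤ/2ℤ) × (ℤ/2ℤ) and let t ∈ (0,1). Then the map Q_t : P(G) → P(G) is not surjective; more precisely, there is no μ ∈ P(G) with Q_t(μ) = δ_b, where b = (0,1). -/
/-- The Klein four-group `(ℤ/2ℤ) × (ℤ/2ℤ)`. -/
abbrev Klein : Type := ZMod 2 × ZMod 2

/-- The rational map `Q_t(μ) = (1-t) μ (1 - tμ)⁻¹` in the group algebra `ℝ[G]` of the Klein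
four-group. -/
noncomputable def Q (t : ℝ) (μ : AddMonoidAlgebra ℝ Klein) : AddMonoidAlgebra ℝ Klein :=
  (1 - t) • (μ * Ring.inverse (1 - t • μ))

private lemma smul_apply' (c : ℝ) (f : AddMonoidAlgebra ℝ Klein) (x : Klein) :
    (c • f).coeff x = c * f.coeff x := rfl

/-- For the Klein four-group `G = (ℤ/2ℤ) × (ℤ/2ℤ)` and `t ∈ (0,1)`, the map
`Q_t : P(G) → P(G)` is not surjective: there is no `μ ∈ P(G)` with `Q_t(μ) = δ_b`, where
`b = (0,1)`. -/
theorem Qt_not_surjective_klein (t : ℝ) (ht : t ∈ Set.Ioo (0 : ℝ) 1) :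
    ¬ ∃ μ : AddMonoidAlgebra ℝ Klein,
        (∀ x : Klein, 0 ≤ μ.coeff x) ∧ (∑ x : Klein, μ.coeff x = 1) ∧
        Q t μ = AddMonoidAlgebra.single ((0 : ZMod 2), (1 : ZMod 2)) (1 : ℝ) := by
  obtain ⟨ht0, ht1⟩ := ht
  rintro ⟨μ, hpos, hsum, hQ⟩
  set b : Klein := ((0 : ZMod 2), (1 : ZMod 2)) with hb
  by_cases hu : IsUnit (1 - t • μ)
  · -- multiply the equation by `1 - t•μ`
    have key : (1 - t) • μ = AddMonoidAlgebra.single b (1 : ℝ) * (1 - t • μ) := by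
      have := congrArg (· * (1 - t • μ)) hQ
      simpa [Q, smul_mul_assoc, mul_assoc, Ring.inverse_mul_cancel _ hu] using this
    -- evaluate at `0` and at `b`
    have key' : (1 - t) • μ = (1 - t • μ) * AddMonoidAlgebra.single b (1 : ℝ) := by
      rw [key, mul_comm]
    have hbb : b - b = (0 : Klein) := by decide
    have hb0 : (0 : Klein) - b = b := by decide
    have he : (1 - t) * μ.coeff 0 = - (t * μ.coeff b) := by
      have h := congrArg (fun f : AddMonoidAlgebra ℝ Klein => f.coeff 0) key'
      simp only [AddMonoidAlgebra.coeff_smul, Finsupp.smul_apply, smul_eq_mul,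
        AddMonoidAlgebra.coeff_mul_single_apply, ← sub_eq_add_neg, hb0,
        mul_one] at h
      rw [AddMonoidAlgebra.coeff_sub, Finsupp.sub_apply, AddMonoidAlgebra.one_def,
        AddMonoidAlgebra.coeff_single,
        Finsupp.single_eq_of_ne' (show (0 : Klein) ≠ b by decide)] at h
      rw [smul_apply'] at h
      linarith [h]
    have hb' : (1 - t) * μ.coeff b = 1 - t * μ.coeff 0 := by
      have h := congrArg (fun f : AddMonoidAlgebra ℝ Klein => f.coeff b) key'
      simp only [AddMonoidAlgebra.coeff_smul, Finsupp.smul_apply, smul_eq_mul,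
        AddMonoidAlgebra.coeff_mul_single_apply, ← sub_eq_add_neg, hbb,
        mul_one] at h
      rw [AddMonoidAlgebra.coeff_sub, Finsupp.sub_apply, AddMonoidAlgebra.one_def,
        AddMonoidAlgebra.coeff_single,
        Finsupp.single_eq_same] at h
      rw [smul_apply'] at h
      linarith [h]
    have h1 : 0 ≤ μ.coeff 0 := hpos 0
    have h2 : 0 ≤ μ.coeff b := hpos b
    have h3 : t * μ.coeff b = 0 := by nlinarith
    have h4 : μ.coeff b = 0 := by
      rcases mul_eq_zero.1 h3 with h | h
      · exact absurd h ht0.ne'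
      · exact h
    have h5 : μ.coeff 0 = 0 := by nlinarith
    rw [h4, h5] at hb'
    nlinarith
  · -- then `Ring.inverse = 0`, so `Q t μ = 0`, contradicting `Q t μ = δ_b`
    have : Q t μ = 0 := by simp [Q, Ring.inverse_non_unit _ hu]
    rw [this] at hQ
    have := congrArg (fun f : AddMonoidAlgebra ℝ Klein => f.coeff b) hQ
    simp [hb, Finsupp.single_apply] at this
end

section
/- Let G be a compact metrizable abelian topological group, μ a Borel probability measure on G, (t_k) a sequence in [0,1) with t_k → 1, and suppose Q_{t_k}(μ) converges to a Borel probability measure ν in the topology of weak convergence of probability measures. Then ν*μ = ν, i.e., ν solves the Choquet–Deny equation for μ. -/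
open MeasureTheory Filter

/-- `convPow μ n = μ^{*(n+1)}`, the `(n+1)`-fold convolution power of `μ`. -/
noncomputable def convPow {G : Type*} [CommGroup G] [MeasurableSpace G]
    (μ : Measure G) : ℕ → Measure G
  | 0 => μ
  | n + 1 => (convPow μ n).mconv μ

/-- The rational map `Q_t(μ) = (1-t) Σ_{n=0}^∞ t^n μ^{*(n+1)}`. -/
noncomputable def Qt {G : Type*} [CommGroup G] [MeasurableSpace G]
    (t : ℝ) (μ : Measure G) : Measure G :=
  Measure.sum (fun n : ℕ => ENNReal.ofReal ((1 - t) * t ^ n) • convPow μ n)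

section Aux

variable {G : Type*} [CommGroup G] [TopologicalSpace G]
    [IsTopologicalGroup G] [CompactSpace G] [TopologicalSpace.MetrizableSpace G]
    [MeasurableSpace G] [BorelSpace G]

instance convPow_prob (μ : Measure G) [IsProbabilityMeasure μ] (n : ℕ) :
    IsProbabilityMeasure (convPow μ n) := by
  induction n with
  | zero => simpa [convPow] using ‹IsProbabilityMeasure μ›
  | succ n ih =>
    show IsProbabilityMeasure ((convPow μ n).mconv μ)
    exact Measure.probabilitymeasure_of_probabilitymeasures_mconv _ _

lemma integral_mconv_eq (σ μ : Measure G) [IsProbabilityMeasure σ] [IsProbabilityMeasure μ]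
    (f : BoundedContinuousFunction G ℝ) :
    ∫ z, f z ∂(σ.mconv μ) = ∫ x, ∫ y, f (x * y) ∂μ ∂σ := by
  have hmul : Continuous fun p : G × G => p.1 * p.2 := continuous_mul
  rw [Measure.mconv, integral_map hmul.aemeasurable
    f.continuous.aestronglyMeasurable]
  have hint : Integrable (fun p : G × G => f (p.1 * p.2)) (σ.prod μ) :=
    (f.compContinuous ⟨fun p : G × G => p.1 * p.2, hmul⟩).integrable _
  exact integral_prod _ hint

lemma Qt_prob (μ : Measure G) [IsProbabilityMeasure μ] {s : ℝ} (hs : s ∈ Set.Ico (0:ℝ) 1) :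
    IsProbabilityMeasure (Qt s μ) := by
  constructor
  rw [Qt, Measure.sum_apply _ MeasurableSet.univ]
  simp only [Measure.smul_apply, smul_eq_mul, measure_univ, mul_one]
  have h1 : ∀ n : ℕ, 0 ≤ (1 - s) * s ^ n := fun n =>
    mul_nonneg (by linarith [hs.2]) (pow_nonneg hs.1 n)
  rw [← ENNReal.ofReal_tsum_of_nonneg h1]
  · rw [tsum_mul_left, tsum_geometric_of_lt_one hs.1 hs.2,
      mul_inv_cancel₀ (by linarith [hs.2] : (1:ℝ) - s ≠ 0)]
    simp
  · exact (summable_geometric_of_lt_one hs.1 hs.2).mul_left _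

lemma integral_Qt (μ : Measure G) [IsProbabilityMeasure μ] {s : ℝ}
    (hs : s ∈ Set.Ico (0:ℝ) 1) (f : BoundedContinuousFunction G ℝ) :
    ∫ x, f x ∂(Qt s μ) = ∑' n : ℕ, (1 - s) * s ^ n * ∫ x, f x ∂(convPow μ n) := by
  have : IsProbabilityMeasure (Qt s μ) := Qt_prob μ hs
  have hint : Integrable (fun x => f x) (Qt s μ) := f.integrable _
  rw [Qt] at hint ⊢
  rw [integral_sum_measure hint]
  congr 1
  ext n
  rw [integral_smul_measure, ENNReal.toReal_ofReal
    (mul_nonneg (by linarith [hs.2]) (pow_nonneg hs.1 n))]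
  rfl

end Aux

/-- Let `G` be a compact metrizable abelian topological group, `μ` a Borel
probability measure, `(t_k)` a sequence in `[0,1)` with `t_k → 1`, and suppose `Q_{t_k}(μ)`
converges weakly (i.e. the integrals of every bounded continuous function converge) to a Borel
probability measure `ν`. Then `ν * μ = ν`. -/
theorem weak_limit_solves_choquet_deny {G : Type*} [CommGroup G] [TopologicalSpace G]
    [IsTopologicalGroup G] [CompactSpace G] [TopologicalSpace.MetrizableSpace G]
    [MeasurableSpace G] [BorelSpace G]
    (μ ν : Measure G) [IsProbabilityMeasure μ] [IsProbabilityMeasure ν]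
    (t : ℕ → ℝ) (ht : ∀ k, t k ∈ Set.Ico (0 : ℝ) 1)
    (htlim : Tendsto t atTop (nhds 1))
    (hconv : ∀ f : BoundedContinuousFunction G ℝ,
      Tendsto (fun k => ∫ x, f x ∂(Qt (t k) μ)) atTop (nhds (∫ x, f x ∂ν))) :
    ν.mconv μ = ν := by
  -- main step: integrals of every real BCF agree for ν.mconv μ and ν
  have key : ∀ f : BoundedContinuousFunction G ℝ,
      ∫ x, f x ∂(ν.mconv μ) = ∫ x, f x ∂ν := by
    intro f
    -- the function g x = ∫ f(x*y) dμ(y), as a bounded continuous function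
    have gcont : Continuous fun x : G => ∫ y, f (x * y) ∂μ := by
      apply continuous_of_dominated (bound := fun _ : G => ‖f‖)
      · exact fun x => (f.continuous.comp (continuous_mul_left x)).aestronglyMeasurable
      · exact fun x => Filter.Eventually.of_forall fun y => f.norm_coe_le_norm _
      · exact integrable_const _
      · exact Filter.Eventually.of_forall fun y => f.continuous.comp (continuous_mul_right y)
    set g : BoundedContinuousFunction G ℝ :=
      BoundedContinuousFunction.ofNormedAddCommGroup _ gcont ‖f‖ (fun x => by
        calc ‖∫ y, f (x * y) ∂μ‖ ≤ ∫ y, ‖f (x * y)‖ ∂μ := norm_integral_le_integral_norm _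
        _ ≤ ∫ _y, ‖f‖ ∂μ := integral_mono_of_nonneg (Filter.Eventually.of_forall fun y =>
              norm_nonneg _) (integrable_const _)
              (Filter.Eventually.of_forall fun y => f.norm_coe_le_norm _)
        _ = ‖f‖ := by simp) with hg
    have hgapp : ∀ x, g x = ∫ y, f (x * y) ∂μ := fun x => rfl
    -- ∫ g dσ = ∫ f d(σ * μ) for probability σ
    have hgσ : ∀ (σ : Measure G) [IsProbabilityMeasure σ],
        ∫ x, g x ∂σ = ∫ z, f z ∂(σ.mconv μ) := by
      intro σ _
      rw [integral_mconv_eq σ μ f]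
      exact integral_congr_ae (Filter.Eventually.of_forall fun x => hgapp x)
    set A : ℕ → ℝ := fun n => ∫ x, f x ∂(convPow μ n) with hA
    have hAbd : ∀ n, ‖A n‖ ≤ ‖f‖ := by
      intro n
      calc ‖A n‖ ≤ ∫ x, ‖f x‖ ∂(convPow μ n) := norm_integral_le_integral_norm _
      _ ≤ ∫ _x, ‖f‖ ∂(convPow μ n) := integral_mono_of_nonneg
            (Filter.Eventually.of_forall fun y => norm_nonneg _) (integrable_const _)
            (Filter.Eventually.of_forall fun y => f.norm_coe_le_norm _)
      _ = ‖f‖ := by simp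
    -- key algebraic identity: t k * ∫ g dQt + (1 - t k) * A 0 = ∫ f dQt
    have hid : ∀ k, t k * (∫ x, g x ∂(Qt (t k) μ)) + (1 - t k) * A 0
        = ∫ x, f x ∂(Qt (t k) μ) := by
      intro k
      obtain ⟨h0, h1⟩ := ht k
      have hsum : ∀ (B : ℕ → ℝ), (∀ n, ‖B n‖ ≤ ‖f‖) →
          Summable (fun n : ℕ => (1 - t k) * t k ^ n * B n) := by
        intro B hB
        apply Summable.of_norm_bounded (g := fun n => ((1 - t k) * ‖f‖) * t k ^ n)
          (((summable_geometric_of_lt_one h0 h1).mul_left _))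
        intro n
        have hnn : (0:ℝ) ≤ (1 - t k) * t k ^ n :=
          mul_nonneg (by linarith) (pow_nonneg h0 n)
        calc ‖(1 - t k) * t k ^ n * B n‖ = (1 - t k) * t k ^ n * ‖B n‖ := by
              rw [norm_mul, Real.norm_of_nonneg hnn]
          _ ≤ (1 - t k) * t k ^ n * ‖f‖ := by
              exact mul_le_mul_of_nonneg_left (hB n) hnn
          _ = (1 - t k) * ‖f‖ * t k ^ n := by ring
      have hgQ : ∫ x, g x ∂(Qt (t k) μ)
          = ∑' n : ℕ, (1 - t k) * t k ^ n * A (n + 1) := by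
        rw [integral_Qt μ (ht k) g]
        congr 1; ext n
        congr 1
        have : IsProbabilityMeasure (convPow μ n) := convPow_prob μ n
        rw [hgσ (convPow μ n)]
        rfl
      have hfQ : ∫ x, f x ∂(Qt (t k) μ)
          = ∑' n : ℕ, (1 - t k) * t k ^ n * A n := integral_Qt μ (ht k) f
      have e1 : (∑' n : ℕ, t k * ((1 - t k) * t k ^ n * A (n + 1)))
          = ∑' n : ℕ, (1 - t k) * t k ^ (n + 1) * A (n + 1) :=
        tsum_congr fun n => by ring
      rw [hgQ, hfQ, ← tsum_mul_left, e1, Summable.tsum_eq_zero_add (hsum A hAbd)]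
      ring
    -- take limits
    have hgl := hconv g
    have hfl := hconv f
    have hL : Tendsto (fun k => t k * (∫ x, g x ∂(Qt (t k) μ)) + (1 - t k) * A 0)
        atTop (nhds (1 * (∫ x, g x ∂ν) + (1 - 1) * A 0)) :=
      ((htlim.mul hgl).add (((tendsto_const_nhds.sub htlim)).mul tendsto_const_nhds))
    simp only [one_mul, sub_self, zero_mul, add_zero] at hL
    have : (∫ x, g x ∂ν) = ∫ x, f x ∂ν := by
      apply tendsto_nhds_unique _ hfl
      exact hL.congr fun k => hid k
    rw [← this, hgσ ν]
  -- conclude measure equality via lintegrals of ℝ≥0-valued BCFs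
  have : IsProbabilityMeasure (ν.mconv μ) :=
    Measure.probabilitymeasure_of_probabilitymeasures_mconv _ _
  apply ext_of_forall_lintegral_eq_of_IsFiniteMeasure
  intro f
  have lip : LipschitzWith 1 ((↑) : NNReal → ℝ) := isometry_subtype_coe.lipschitz
  have hkey : ∫ x, ((f x : ℝ)) ∂(ν.mconv μ) = ∫ x, ((f x : ℝ)) ∂ν :=
    key (BoundedContinuousFunction.comp _ lip f)
  have h1 := BoundedContinuousFunction.toReal_lintegral_coe_eq_integral f (ν.mconv μ)
  have h2 := BoundedContinuousFunction.toReal_lintegral_coe_eq_integral f ν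
  apply (ENNReal.toReal_eq_toReal_iff'
    (BoundedContinuousFunction.lintegral_lt_top_of_nnreal (μ := ν.mconv μ) f).ne
    (BoundedContinuousFunction.lintegral_lt_top_of_nnreal (μ := ν) f).ne).mp
  rw [h1, h2]
  exact hkey
end

section
/- Let G be a compact Hausdorff abelian topological group and let μ, λ be Borel probability measures on G such that μ(U) > 0 for every nonempty open set U ⊆ G and μ*λ = λ. Then λ is translation invariant: δ_g * λ = λ for every g ∈ G (equivalently λ(gA) = λ(A) for every g ∈ G and every Borel set A), i.e., λ is a Haar probability measure on G. -/
open MeasureTheory Set Filter Topology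

section SW

variable {X Y : Type*} [TopologicalSpace X] [TopologicalSpace Y]
    [CompactSpace X] [CompactSpace Y] [T2Space X] [T2Space Y]
    [MeasurableSpace X] [MeasurableSpace Y] [BorelSpace X] [BorelSpace Y]

/-- A continuous real function on a product of compact Hausdorff spaces is strongly measurable
with respect to the product σ-algebra, by Stone–Weierstrass approximation. -/
lemma stronglyMeasurable_of_continuous_prod (f : X × Y → ℝ) (hf : Continuous f) :
    StronglyMeasurable f := by
  classical
  set S : Set C(X × Y, ℝ) :=
    (Set.range fun φ : C(X, ℝ) => φ.comp ⟨Prod.fst, continuous_fst⟩) ∪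
    (Set.range fun φ : C(Y, ℝ) => φ.comp ⟨Prod.snd, continuous_snd⟩) with hS
  set A : Subalgebra ℝ C(X × Y, ℝ) := Algebra.adjoin ℝ S with hA
  have hmeas : ∀ ψ ∈ A, StronglyMeasurable (ψ : X × Y → ℝ) := by
    intro ψ hψ
    induction hψ using Algebra.adjoin_induction with
    | mem ψ hψ =>
      rcases hψ with ⟨φ, rfl⟩ | ⟨φ, rfl⟩
      · exact (φ.continuous.measurable.comp measurable_fst).stronglyMeasurable
      · exact (φ.continuous.measurable.comp measurable_snd).stronglyMeasurable
    | algebraMap r => exact stronglyMeasurable_const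
    | add x y hx hy hx' hy' => exact hx'.add hy'
    | mul x y hx hy hx' hy' => exact hx'.mul hy'
  have hsep : A.SeparatesPoints := by
    intro p q hpq
    have : p.1 ≠ q.1 ∨ p.2 ≠ q.2 := by
      by_contra h
      push_neg at h
      exact hpq (Prod.ext h.1 h.2)
    rcases this with h1 | h2
    · obtain ⟨φ, hφ0, hφ1, -⟩ := exists_continuous_zero_one_of_isClosed
        (isClosed_singleton (x := p.1)) (isClosed_singleton (x := q.1))
        (Set.disjoint_singleton.2 h1)
      refine ⟨(φ.comp ⟨Prod.fst, continuous_fst⟩ : C(X × Y, ℝ)), ?_, ?_⟩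
      · exact ⟨_, Algebra.subset_adjoin (Or.inl ⟨φ, rfl⟩), rfl⟩
      · simp only [ContinuousMap.comp_apply, ContinuousMap.coe_mk]
        rw [hφ0 rfl, hφ1 rfl]; norm_num
    · obtain ⟨φ, hφ0, hφ1, -⟩ := exists_continuous_zero_one_of_isClosed
        (isClosed_singleton (x := p.2)) (isClosed_singleton (x := q.2))
        (Set.disjoint_singleton.2 h2)
      refine ⟨(φ.comp ⟨Prod.snd, continuous_snd⟩ : C(X × Y, ℝ)), ?_, ?_⟩
      · exact ⟨_, Algebra.subset_adjoin (Or.inr ⟨φ, rfl⟩), rfl⟩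
      · simp only [ContinuousMap.comp_apply, ContinuousMap.coe_mk]
        rw [hφ0 rfl, hφ1 rfl]; norm_num
  have happrox : ∀ n : ℕ, ∃ g : A, ∀ z, ‖(g : X × Y → ℝ) z - f z‖ < 1 / (n + 1) := fun n =>
    ContinuousMap.exists_mem_subalgebra_near_continuous_of_separatesPoints A hsep f hf
      (1 / (n + 1)) (by positivity)
  choose g hg using happrox
  apply stronglyMeasurable_of_tendsto (atTop : Filter ℕ)
    (f := fun n => ((g n : C(X × Y, ℝ)) : X × Y → ℝ))
    (fun n => hmeas _ (g n).2)
  rw [tendsto_pi_nhds]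
  intro z
  rw [tendsto_iff_dist_tendsto_zero]
  have hdist : ∀ n : ℕ, dist ((g n : X × Y → ℝ) z) (f z) ≤ 1 / (n + 1) := by
    intro n
    rw [Real.dist_eq]
    exact le_of_lt (hg n z)
  exact squeeze_zero (fun n => dist_nonneg) hdist tendsto_one_div_add_atTop_nhds_zero_nat

end SW

section CD

variable {G : Type*} [CommGroup G] [TopologicalSpace G]
    [IsTopologicalGroup G] [CompactSpace G] [T2Space G] [MeasurableSpace G] [BorelSpace G]

lemma cd_hasCompactSupport (f : G → ℝ) : HasCompactSupport f :=
  IsCompact.of_isClosed_subset isCompact_univ (isClosed_tsupport f) (subset_univ _)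

lemma cd_integrable {f : G → ℝ} (hf : Continuous f) (ν : Measure G) [IsFiniteMeasure ν] :
    Integrable f ν :=
  hf.integrable_of_hasCompactSupport (cd_hasCompactSupport f)

lemma cd_bound (f : G → ℝ) (hf : Continuous f) : ∃ C : ℝ, ∀ x, ‖f x‖ ≤ C := by
  obtain ⟨x₀, -, hx₀⟩ := isCompact_univ.exists_isMaxOn univ_nonempty (hf.norm.continuousOn)
  exact ⟨‖f x₀‖, fun x => hx₀ (mem_univ x)⟩

/-- Continuity of the translated integral. -/
lemma cd_cont_translate (l : Measure G) [IsProbabilityMeasure l]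
    {f : G → ℝ} (hf : Continuous f) :
    Continuous fun g : G => ∫ x, f (g * x) ∂l := by
  have hL : LipschitzWith 1 (fun ψ : C(G, ℝ) => ∫ x, ψ x ∂l) := by
    apply LipschitzWith.of_dist_le_mul
    intro ψ₁ ψ₂
    rw [NNReal.coe_one, one_mul, Real.dist_eq,
      ← integral_sub (cd_integrable ψ₁.continuous l) (cd_integrable ψ₂.continuous l)]
    have hb : ∀ x, ‖ψ₁ x - ψ₂ x‖ ≤ dist ψ₁ ψ₂ := by
      intro x
      simpa [Real.dist_eq, Real.norm_eq_abs] using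
        ContinuousMap.dist_apply_le_dist (f := ψ₁) (g := ψ₂) x
    calc |∫ x, (ψ₁ x - ψ₂ x) ∂l| ≤ dist ψ₁ ψ₂ * (l univ).toReal :=
          norm_integral_le_of_norm_le_const (ae_of_all _ hb)
      _ = dist ψ₁ ψ₂ := by simp
  have hΦ := (ContinuousMap.mk (fun p : G × G => f (p.1 * p.2))
    (hf.comp continuous_mul)).curry.continuous
  have : (fun g : G => ∫ x, f (g * x) ∂l) =
      (fun ψ : C(G, ℝ) => ∫ x, ψ x ∂l) ∘
        (ContinuousMap.mk (fun p : G × G => f (p.1 * p.2)) (hf.comp continuous_mul)).curry := by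
    funext g
    simp [ContinuousMap.curry_apply]
  rw [this]
  exact hL.continuous.comp hΦ

/-- The key maximum-principle step: integrals of translates agree. -/
lemma cd_translate_integral_eq (μ l : Measure G) [IsProbabilityMeasure μ] [IsProbabilityMeasure l]
    (hμpos : ∀ U : Set G, IsOpen U → U.Nonempty → 0 < μ U)
    (hfix : μ.mconv l = l) {f : G → ℝ} (hf : Continuous f) (g : G) :
    ∫ x, f (g * x) ∂l = ∫ x, f x ∂l := by
  have hmul : AEMeasurable (fun p : G × G => p.1 * p.2) (μ.prod l) := by
    by_contra h
    have h0 : μ.mconv l = 0 := by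
      rw [Measure.mconv, Measure.map_of_not_aemeasurable h]
    rw [hfix] at h0
    exact (IsProbabilityMeasure.ne_zero l) h0
  set F : G → ℝ := fun g => ∫ x, f (g * x) ∂l with hFdef
  have hFc : Continuous F := cd_cont_translate l hf
  obtain ⟨C, hC⟩ := cd_bound f hf
  have harm : ∀ g : G, F g = ∫ x, F (g * x) ∂μ := by
    intro g
    have hcont : Continuous fun z : G => f (g * z) := hf.comp (continuous_mul_left g)
    have hsm : AEStronglyMeasurable (fun z : G => f (g * z))
        (Measure.map (fun p : G × G => p.1 * p.2) (μ.prod l)) := by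
      rw [← Measure.mconv, hfix]
      exact hcont.aestronglyMeasurable
    have hint : Integrable (fun p : G × G => f (g * (p.1 * p.2))) (μ.prod l) := by
      refine Integrable.mono' (integrable_const C)
        ((hcont.measurable.comp_aemeasurable hmul).aestronglyMeasurable)
        (ae_of_all _ fun p => hC _)
    calc F g = ∫ z, f (g * z) ∂(μ.mconv l) := by rw [hfix]
      _ = ∫ p : G × G, f (g * (p.1 * p.2)) ∂(μ.prod l) := by
          rw [Measure.mconv, integral_map hmul hsm]
      _ = ∫ x, ∫ y, f (g * (x * y)) ∂l ∂μ := integral_prod _ hint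
      _ = ∫ x, F (g * x) ∂μ := by
          simp_rw [← mul_assoc, hFdef]
  obtain ⟨g₀, -, hg₀⟩ := isCompact_univ.exists_isMinOn univ_nonempty hFc.continuousOn
  have hmin : ∀ y, F g₀ ≤ F y := fun y => hg₀ (mem_univ y)
  have key : ∀ x, F (g₀ * x) - F g₀ = 0 := by
    have hcF : Continuous fun x : G => F (g₀ * x) := by
      exact hFc.comp (continuous_mul_left g₀)
    have hFtc : Continuous fun x : G => F (g₀ * x) - F g₀ := hcF.sub continuous_const
    have hiF : Integrable (fun x : G => F (g₀ * x)) μ := cd_integrable hcF μ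
    have hintg : Integrable (fun x => F (g₀ * x) - F g₀) μ := hiF.sub (integrable_const _)
    have hzero : ∫ x, (F (g₀ * x) - F g₀) ∂μ = 0 := by
      rw [integral_sub hiF (integrable_const _), integral_const, ← harm g₀]
      simp
    have hae : (fun x => F (g₀ * x) - F g₀) =ᵐ[μ] 0 :=
      (integral_eq_zero_iff_of_nonneg (fun x => sub_nonneg.2 (hmin _)) hintg).1 hzero
    have hUnull : μ {x | F (g₀ * x) - F g₀ ≠ 0} = 0 := by
      simpa [Filter.EventuallyEq, ae_iff] using hae
    have hU : IsOpen {x : G | F (g₀ * x) - F g₀ ≠ 0} := by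
      have : {x : G | F (g₀ * x) - F g₀ ≠ 0} =
          (fun x : G => F (g₀ * x) - F g₀) ⁻¹' ({0}ᶜ) := rfl
      rw [this]
      exact (isOpen_compl_iff.2 isClosed_singleton).preimage hFtc
    intro x
    by_contra hx
    have hne : ({x : G | F (g₀ * x) - F g₀ ≠ 0} : Set G).Nonempty := ⟨x, hx⟩
    exact absurd hUnull (ne_of_gt (hμpos _ hU hne))
  have hconst : ∀ y, F y = F g₀ := by
    intro y
    have := key (g₀⁻¹ * y)
    rw [mul_inv_cancel_left, sub_eq_zero] at this
    exact this
  calc ∫ x, f (g * x) ∂l = F g := rfl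
    _ = F 1 := by rw [hconst g, hconst 1]
    _ = ∫ x, f x ∂l := by simp [hFdef]

/-- The integral of a continuous function against `l` agrees with its Haar integral. -/
lemma cd_integral_eq_haar (μ l : Measure G) [IsProbabilityMeasure μ] [IsProbabilityMeasure l]
    (hμpos : ∀ U : Set G, IsOpen U → U.Nonempty → 0 < μ U)
    (hfix : μ.mconv l = l) {f : G → ℝ} (hf : Continuous f) :
    ∫ x, f x ∂l = ∫ x, f x ∂(Measure.haarMeasure (⊤ : TopologicalSpace.PositiveCompacts G)) := by
  haveI : Nonempty G := ⟨1⟩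
  set hh : Measure G := Measure.haarMeasure (⊤ : TopologicalSpace.PositiveCompacts G) with hhdef
  haveI : IsProbabilityMeasure hh := ⟨by
    rw [← TopologicalSpace.PositiveCompacts.coe_top (α := G)]
    exact Measure.haarMeasure_self⟩
  obtain ⟨C, hC⟩ := cd_bound f hf
  have hsm : StronglyMeasurable fun p : G × G => f (p.1 * p.2) :=
    stronglyMeasurable_of_continuous_prod _ (hf.comp continuous_mul)
  have hint : Integrable (fun p : G × G => f (p.1 * p.2)) (hh.prod l) :=
    Integrable.mono' (integrable_const C) hsm.aestronglyMeasurable (ae_of_all _ fun p => hC _)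
  have swap : ∫ g, ∫ x, f (g * x) ∂l ∂hh = ∫ x, ∫ g, f (g * x) ∂hh ∂l :=
    integral_integral_swap hint
  have h1 : ∫ g, ∫ x, f (g * x) ∂l ∂hh = ∫ x, f x ∂l := by
    have e : ∀ g : G, ∫ x, f (g * x) ∂l = ∫ x, f x ∂l :=
      fun g => cd_translate_integral_eq μ l hμpos hfix hf g
    simp_rw [e]
    simp
  have h2 : ∫ x, ∫ g, f (g * x) ∂hh ∂l = ∫ x, f x ∂hh := by
    have e : ∀ x : G, ∫ g, f (g * x) ∂hh = ∫ y, f y ∂hh := fun x =>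
      integral_mul_right_eq_self f x
    simp_rw [e]
    simp
  rw [← h1, swap, h2]

/-- `l` agrees with the Haar measure on level-one sets of continuous functions. -/
lemma cd_zeroset_eq (μ l : Measure G) [IsProbabilityMeasure μ] [IsProbabilityMeasure l]
    (hμpos : ∀ U : Set G, IsOpen U → U.Nonempty → 0 < μ U)
    (hfix : μ.mconv l = l) {f : G → ℝ} (hf : Continuous f) :
    l (f ⁻¹' {1}) = (Measure.haarMeasure (⊤ : TopologicalSpace.PositiveCompacts G)) (f ⁻¹' {1}) := by
  haveI : Nonempty G := ⟨1⟩
  set hh : Measure G := Measure.haarMeasure (⊤ : TopologicalSpace.PositiveCompacts G) with hhdef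
  haveI : IsProbabilityMeasure hh := ⟨by
    rw [← TopologicalSpace.PositiveCompacts.coe_top (α := G)]
    exact Measure.haarMeasure_self⟩
  obtain ⟨u, -, u_mem, u_lim⟩ : ∃ u, StrictAnti u ∧ (∀ n : ℕ, u n ∈ Set.Ioo (0 : ℝ) 1)
      ∧ Tendsto u atTop (𝓝 0) := exists_seq_strictAnti_tendsto' one_pos
  let v : ℕ → ℝ → ℝ := fun n x => thickenedIndicator (u_mem n).1 ({1} : Set ℝ) x
  have vf_cont : ∀ n, Continuous fun x : G => v n (f x) := by
    intro n
    apply Continuous.comp (continuous_induced_dom.comp ?_) hf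
    exact BoundedContinuousFunction.continuous (thickenedIndicator (u_mem n).left {1})
  have hv01 : ∀ n x, ‖v n (f x)‖ ≤ (1 : ℝ) := by
    intro n x
    simp only [v, Real.norm_eq_abs, NNReal.abs_eq]
    norm_cast
    exact thickenedIndicator_le_one _ _ _
  have I : ∀ (ν : Measure G), IsProbabilityMeasure ν →
      Tendsto (fun n => ∫ x, v n (f x) ∂ν) atTop
        (𝓝 (∫ x, Set.indicator ({1} : Set ℝ) (fun _ => (1 : ℝ)) (f x) ∂ν)) := by
    intro ν hν
    apply tendsto_integral_of_dominated_convergence (bound := fun _ => (1 : ℝ))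
    · exact fun n => (vf_cont n).aestronglyMeasurable
    · exact integrable_const _
    · exact fun n => ae_of_all _ fun x => hv01 n x
    · filter_upwards with x
      have T := tendsto_pi_nhds.1 (thickenedIndicator_tendsto_indicator_closure
          (fun n => (u_mem n).1) u_lim ({1} : Set ℝ)) (f x)
      simp only [thickenedIndicator_apply, closure_singleton] at T
      convert NNReal.tendsto_coe.2 T
      all_goals by_cases h : f x ∈ ({1} : Set ℝ) <;> simp [Set.indicator, h]
  have M : ∀ n, ∫ x, v n (f x) ∂l = ∫ x, v n (f x) ∂hh :=
    fun n => cd_integral_eq_haar μ l hμpos hfix (vf_cont n)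
  have I1 := I l inferInstance
  simp_rw [M] at I1
  have J1 : ∫ x, Set.indicator ({1} : Set ℝ) (fun _ => (1 : ℝ)) (f x) ∂l
      = ∫ x, Set.indicator ({1} : Set ℝ) (fun _ => (1 : ℝ)) (f x) ∂hh :=
    tendsto_nhds_unique I1 (I hh inferInstance)
  have hind : (fun x => Set.indicator ({1} : Set ℝ) (fun _ => (1 : ℝ)) (f x)) =
      fun x => Set.indicator (f ⁻¹' {1}) (fun _ => (1 : ℝ)) x := by
    ext x
    exact (Set.indicator_comp_right f).symm
  have mf : MeasurableSet (f ⁻¹' {1}) := (isClosed_singleton.preimage hf).measurableSet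
  rw [hind, integral_indicator_const _ mf, integral_indicator_const _ mf] at J1
  simp only [smul_eq_mul, mul_one] at J1
  exact (ENNReal.toReal_eq_toReal_iff' (measure_ne_top l _) (measure_ne_top hh _)).1 J1

/-- The Haar measure is dominated by `l`. -/
lemma cd_haar_le (μ l : Measure G) [IsProbabilityMeasure μ] [IsProbabilityMeasure l]
    (hμpos : ∀ U : Set G, IsOpen U → U.Nonempty → 0 < μ U)
    (hfix : μ.mconv l = l) {s : Set G} (hs : MeasurableSet s) :
    (Measure.haarMeasure (⊤ : TopologicalSpace.PositiveCompacts G)) s ≤ l s := by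
  haveI : Nonempty G := ⟨1⟩
  set hh : Measure G := Measure.haarMeasure (⊤ : TopologicalSpace.PositiveCompacts G) with hhdef
  haveI : IsProbabilityMeasure hh := ⟨by
    rw [← TopologicalSpace.PositiveCompacts.coe_top (α := G)]
    exact Measure.haarMeasure_self⟩
  refine le_of_forall_lt fun r hr => ?_
  obtain ⟨K, hKs, ⟨f, fc, -, rfl⟩, hrK⟩ :=
    Measure.innerRegularWRT_preimage_one_hasCompactSupport_measure_ne_top_of_group (μ := hh)
      ⟨hs, measure_ne_top hh s⟩ r hr
  calc r < hh (f ⁻¹' {1}) := hrK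
    _ = l (f ⁻¹' {1}) := (cd_zeroset_eq μ l hμpos hfix fc).symm
    _ ≤ l s := measure_mono hKs

/-- The fixed measure `l` is the Haar probability measure. -/
lemma cd_eq_haar (μ l : Measure G) [IsProbabilityMeasure μ] [IsProbabilityMeasure l]
    (hμpos : ∀ U : Set G, IsOpen U → U.Nonempty → 0 < μ U)
    (hfix : μ.mconv l = l) :
    l = Measure.haarMeasure (⊤ : TopologicalSpace.PositiveCompacts G) := by
  haveI : Nonempty G := ⟨1⟩
  set hh : Measure G := Measure.haarMeasure (⊤ : TopologicalSpace.PositiveCompacts G) with hhdef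
  haveI : IsProbabilityMeasure hh := ⟨by
    rw [← TopologicalSpace.PositiveCompacts.coe_top (α := G)]
    exact Measure.haarMeasure_self⟩
  ext s hs
  refine le_antisymm ?_ (cd_haar_le μ l hμpos hfix hs)
  obtain ⟨⟨f, f_cont⟩, hfone, -, -, -⟩ : ∃ f : C(G, ℝ), EqOn f 1 (closure s) ∧ EqOn f 0 ∅
      ∧ HasCompactSupport f ∧ ∀ x, f x ∈ Icc (0 : ℝ) 1 :=
    exists_continuous_one_zero_of_isCompact isClosed_closure.isCompact isClosed_empty
      (disjoint_empty _)
  set t : Set G := f ⁻¹' {1} with htdef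
  have t_closed : IsClosed t := isClosed_singleton.preimage f_cont
  have st : s ⊆ t := subset_closure.trans fun x hx => (hfone hx : f x = 1)
  have A : hh (t \ s) ≤ l (t \ s) :=
    cd_haar_le μ l hμpos hfix (t_closed.measurableSet.diff hs)
  have B : l t = hh t := cd_zeroset_eq μ l hμpos hfix f_cont
  rw [measure_diff st hs.nullMeasurableSet (measure_ne_top hh s),
    measure_diff st hs.nullMeasurableSet (measure_ne_top l s), B] at A
  have hlt : l s ≤ hh t := le_trans (measure_mono st) (le_of_eq B)
  exact (ENNReal.sub_le_sub_iff_left hlt (measure_ne_top hh t)).1 A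

end CD

/-- Let `G` be a compact Hausdorff abelian topological group and `μ, λ` Borel
probability measures with `μ(U) > 0` for every nonempty open `U` and `μ * λ = λ`. Then `λ` is
translation invariant: `δ_g * λ = λ` for every `g` (equivalently `λ(g⁻¹A) = λ(A)` for all
Borel `A`), i.e. `λ` is a Haar probability measure. -/
theorem choquet_deny_is_haar {G : Type*} [CommGroup G] [TopologicalSpace G]
    [IsTopologicalGroup G] [CompactSpace G] [T2Space G] [MeasurableSpace G] [BorelSpace G]
    (μ l : Measure G) [IsProbabilityMeasure μ] [IsProbabilityMeasure l]
    (hμpos : ∀ U : Set G, IsOpen U → U.Nonempty → 0 < μ U)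
    (hfix : μ.mconv l = l) :
    ∀ g : G, (Measure.dirac g).mconv l = l ∧ l.map (fun x => g * x) = l := by
  intro g
  haveI : Nonempty G := ⟨1⟩
  have hl : l = Measure.haarMeasure (⊤ : TopologicalSpace.PositiveCompacts G) :=
    cd_eq_haar μ l hμpos hfix
  have hmap : l.map (fun x => g * x) = l := by
    conv_lhs => rw [hl]
    conv_rhs => rw [hl]
    exact MeasureTheory.map_mul_left_eq_self _ g
  refine ⟨?_, hmap⟩
  rw [Measure.mconv, Measure.dirac_prod]
  have hPm : Measurable (Prod.mk g : G → G × G) := measurable_prodMk_left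
  have hae : AEMeasurable (fun p : G × G => p.1 * p.2) (Measure.map (Prod.mk g) l) := by
    refine ⟨fun p => g * p.2, (measurable_const_mul g).comp measurable_snd, ?_⟩
    rw [Filter.EventuallyEq, ae_iff]
    have hsub : {p : G × G | ¬ p.1 * p.2 = g * p.2} ⊆ {p : G × G | p.1 ≠ g} := by
      intro p hp
      simp only [mem_setOf_eq] at hp ⊢
      intro h1
      exact hp (by rw [h1])
    have hnull : Measure.map (Prod.mk g) l {p : G × G | p.1 ≠ g} = 0 := by
      have hms : MeasurableSet {p : G × G | p.1 ≠ g} := by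
        have hrw : {p : G × G | p.1 ≠ g} = Prod.fst ⁻¹' ({g}ᶜ) := rfl
        rw [hrw]
        exact measurable_fst (measurableSet_singleton g).compl
      rw [Measure.map_apply hPm hms]
      have he : (Prod.mk g ⁻¹' {p : G × G | p.1 ≠ g}) = (∅ : Set G) := by
        ext x
        simp
      rw [he, measure_empty]
    exact measure_mono_null hsub hnull
  rw [AEMeasurable.map_map_of_aemeasurable hae hPm.aemeasurable]
  have hco : ((fun p : G × G => p.1 * p.2) ∘ Prod.mk g) = fun x : G => g * x := rfl
  rw [hco, hmap]
end

section
/- Let G be a compact Hausdorff abelian topological group and t ∈ (0,1). A Borel probability measure μ on G satisfies Q_t(μ) = μ if and only if μ is idempotent for convolution, i.e., μ*μ = μ. Hence the fixed-point set of Q_t is exactly the set of idempotent probability measures. -/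
open MeasureTheory
open scoped ENNReal

lemma sfinite_convPow {G : Type*} [CommGroup G] [MeasurableSpace G]
    (μ : Measure G) [SFinite μ] : ∀ n, SFinite (convPow μ n)
  | 0 => by unfold convPow; infer_instance
  | n + 1 => by
      have := sfinite_convPow μ n
      unfold convPow
      infer_instance

lemma prod_smul_left' {α β : Type*} [MeasurableSpace α] [MeasurableSpace β]
    (c : ℝ≥0∞) (μ : Measure α) (ν : Measure β) [SFinite μ] [SFinite ν] :
    (c • μ).prod ν = c • (μ.prod ν) := by
  ext s hs
  rw [Measure.prod_apply hs, Measure.smul_apply, Measure.prod_apply hs,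
    lintegral_smul_measure]

set_option maxHeartbeats 1000000 in
/-- For `t ∈ (0,1)`, a Borel probability measure `μ` on a compact Hausdorff
abelian topological group satisfies `Q_t(μ) = μ` if and only if `μ * μ = μ`: the fixed points
of `Q_t` are exactly the idempotent probability measures. -/
theorem Qt_fixed_iff_idempotent {G : Type*} [CommGroup G] [TopologicalSpace G]
    [IsTopologicalGroup G] [CompactSpace G] [T2Space G] [MeasurableSpace G] [BorelSpace G]
    (t : ℝ) (ht : t ∈ Set.Ioo (0 : ℝ) 1)
    (μ : Measure G) [IsProbabilityMeasure μ] :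
    Qt t μ = μ ↔ μ.mconv μ = μ := by
  obtain ⟨ht0, ht1⟩ := ht
  have ht0' : (0:ℝ) ≤ t := ht0.le
  have h1t : (0:ℝ) ≤ 1 - t := by linarith
  set c : ℕ → ℝ≥0∞ := fun n => ENNReal.ofReal ((1 - t) * t ^ n) with hc
  have hcsucc : ∀ n, c (n + 1) = ENNReal.ofReal t * c n := by
    intro n
    rw [hc]
    simp only
    rw [← ENNReal.ofReal_mul ht0']
    ring_nf
  have hc0 : c 0 = ENNReal.ofReal (1 - t) := by simp [hc]
  constructor
  · -- forward: Qt t μ = μ → μ ∗ μ = μ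
    intro h
    by_cases hmeas : AEMeasurable (fun p : G × G => p.1 * p.2) (μ.prod μ)
    · -- the multiplication is a.e. measurable for `μ.prod μ`
      have sfc : ∀ n, SFinite (convPow μ n) := sfinite_convPow μ
      have hps : (Qt t μ).prod μ
          = Measure.sum (fun n => c n • ((convPow μ n).prod μ)) := by
        simp only [Qt, ← hc]
        rw [Measure.prod_sum_left]
        refine congrArg Measure.sum (funext fun n => ?_)
        haveI := sfc n
        exact prod_smul_left' _ _ _
      have hmeas2 : AEMeasurable (fun p : G × G => p.1 * p.2)
          (Measure.sum fun n => c n • ((convPow μ n).prod μ)) := by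
        rw [← hps, h]; exact hmeas
      have hconv : μ.mconv μ = Measure.sum (fun n => c n • convPow μ (n + 1)) := by
        calc μ.mconv μ = (Qt t μ).mconv μ := by rw [h]
          _ = Measure.sum (fun n => c n • convPow μ (n + 1)) := by
              show Measure.map _ ((Qt t μ).prod μ) = _
              rw [hps, Measure.map_sum hmeas2]
              refine congrArg Measure.sum (funext fun n => ?_)
              rw [Measure.map_smul]
              rfl
      ext s hs
      have hμs : μ s ≠ ∞ := (measure_lt_top μ s).ne
      have hQ : μ s = ∑' n, c n * (convPow μ n) s := by
        conv_lhs => rw [← h]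
        simp only [Qt, ← hc]
        rw [Measure.sum_apply _ hs]
        simp [Measure.smul_apply]
        rfl
      have hM : (μ.mconv μ) s = ∑' n, c n * (convPow μ (n + 1)) s := by
        rw [hconv, Measure.sum_apply _ hs]
        simp [Measure.smul_apply]
      have e1 : μ s = c 0 * (convPow μ 0) s
          + ∑' n, c (n + 1) * (convPow μ (n + 1)) s := by
        rw [hQ]; exact tsum_eq_zero_add' ENNReal.summable
      have e2 : (∑' n, c (n + 1) * (convPow μ (n + 1)) s)
          = ENNReal.ofReal t * (μ.mconv μ) s := by
        rw [hM, ← ENNReal.tsum_mul_left]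
        refine tsum_congr (fun n => ?_)
        rw [hcsucc, mul_assoc]
      have e3 : μ s = c 0 * μ s + ENNReal.ofReal t * (μ.mconv μ) s := by
        rw [← e2]; exact e1
      have e4 : μ s = c 0 * μ s + ENNReal.ofReal t * μ s := by
        have hone : c 0 + ENNReal.ofReal t = 1 := by
          rw [hc0, ← ENNReal.ofReal_add h1t ht0', sub_add_cancel, ENNReal.ofReal_one]
        calc μ s = (c 0 + ENNReal.ofReal t) * μ s := by rw [hone, one_mul]
          _ = c 0 * μ s + ENNReal.ofReal t * μ s := by ring
      have hfin : c 0 * μ s ≠ ∞ := ENNReal.mul_ne_top ENNReal.ofReal_ne_top hμs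
      have e5 : ENNReal.ofReal t * (μ.mconv μ) s = ENNReal.ofReal t * μ s :=
        (ENNReal.add_right_inj hfin).mp (e3.symm.trans e4)
      exact (ENNReal.mul_right_inj
        (by simpa using ht0) ENNReal.ofReal_ne_top).mp e5
    · -- the multiplication is not a.e. measurable: contradiction with `Qt t μ = μ`
      exfalso
      have hz : μ.mconv μ = 0 := Measure.map_of_not_aemeasurable hmeas
      have hpow0 : ∀ n, convPow μ (n + 1) = (0 : Measure G) := by
        intro n
        induction n with
        | zero => exact hz
        | succ n ih =>
            show (convPow μ (n + 1)).mconv μ = 0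
            rw [ih]
            exact Measure.zero_mconv μ
      have hQu : Qt t μ Set.univ = c 0 := by
        simp only [Qt, ← hc]
        rw [Measure.sum_apply _ MeasurableSet.univ, tsum_eq_zero_add' ENNReal.summable]
        simp only [Measure.smul_apply, smul_eq_mul, hpow0]
        show c 0 * μ Set.univ + _ = c 0
        simp [measure_univ]
      have hone : c 0 = 1 := by rw [← hQu, h, measure_univ]
      have hlt : c 0 < 1 := by
        rw [hc0]
        exact ENNReal.ofReal_lt_one.2 (by linarith)
      exact absurd hone hlt.ne
  · -- backward: μ ∗ μ = μ → Qt t μ = μ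
    intro h
    have hpow : ∀ n, convPow μ n = μ := by
      intro n
      induction n with
      | zero => rfl
      | succ n ih =>
          show (convPow μ n).mconv μ = μ
          rw [ih, h]
    have hctsum : (∑' n, c n) = 1 := by
      have hsummable : Summable (fun n : ℕ => (1 - t) * t ^ n) :=
        (summable_geometric_of_lt_one ht0' ht1).mul_left _
      rw [hc, ← ENNReal.ofReal_tsum_of_nonneg (fun n => by positivity) hsummable]
      rw [tsum_mul_left, tsum_geometric_of_lt_one ht0' ht1,
        mul_inv_cancel₀ (by linarith : (1:ℝ) - t ≠ 0), ENNReal.ofReal_one]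
    ext s hs
    simp only [Qt, ← hc]
    rw [Measure.sum_apply _ hs]
    simp only [hpow, Measure.smul_apply, smul_eq_mul]
    rw [ENNReal.tsum_mul_right, hctsum, one_mul]
end

section
/- Let G be a finite abelian group of order n, let t ∈ [0,1), and let η = (1/n) Σ_{g∈G} δ_g ∈ ℝ[G] be the uniform probability (the main attractor, an idempotent). Consider the map F : x ↦ (1−t) x (1 − tx)^{-1}, defined on a neighborhood of η in ℝ[G] on which 1 − tx is invertible. Then the Fréchet derivative of F at η satisfies DF(η)(ν) = (1−t) ν for every ν ∈ ℝ[G] with Σ_{g∈G} ν(g) = 0. In particular the derivative of Q_t at the main attractor acts on the tangent space of P(G) as multiplication by the contraction factor 1−t. -/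
/-- Identification of functions `G → ℝ` on a finite group with elements of the group algebra
`ℝ[G]`. -/
noncomputable def toMA {G : Type*} [CommGroup G] [Fintype G] (x : G → ℝ) :
    MonoidAlgebra ℝ G :=
  MonoidAlgebra.ofCoeff (Finsupp.equivFunOnFinite.symm x)

/-- The rational map `x ↦ (1-t) x (1 - tx)⁻¹` of the group algebra `ℝ[G]`, transported to the
normed space of functions `G → ℝ` via the identification `ℝ[G] ≃ (G → ℝ)` for finite `G`
(convolution as multiplication). -/
noncomputable def F {G : Type*} [CommGroup G] [Fintype G] (t : ℝ) (x : G → ℝ) : G → ℝ :=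
  fun g => ((1 - t) • (toMA x * Ring.inverse (1 - t • toMA x))).coeff g

noncomputable section Aux

variable {G : Type*} [CommGroup G] [Fintype G]

namespace Stmt17

abbrev A (G : Type*) [CommGroup G] [Fintype G] := MonoidAlgebra ℝ G

lemma mul_apply' (f g : A G) (x : G) : (f * g).coeff x = ∑ h : G, f.coeff h * g.coeff (h⁻¹ * x) := by
  rw [MonoidAlgebra.coeff_mul_apply_left, Finsupp.sum_fintype]
  intro a; simp

noncomputable instance : NormedAddCommGroup (A G) :=
  AddGroupNorm.toNormedAddCommGroup
    { toFun := fun x => ∑ g : G, |x.coeff g|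
      map_zero' := by simp
      add_le' := fun x y => by
        calc ∑ g : G, |(x + y).coeff g| = ∑ g : G, |x.coeff g + y.coeff g| := rfl
          _ ≤ ∑ g : G, (|x.coeff g| + |y.coeff g|) :=
              Finset.sum_le_sum fun g _ => abs_add_le (x.coeff g) (y.coeff g)
          _ = ∑ g : G, |x.coeff g| + ∑ g : G, |y.coeff g| := Finset.sum_add_distrib
      neg' := fun x => Finset.sum_congr rfl fun g _ => by show |(-(x.coeff g))| = _; rw [abs_neg]
      eq_zero_of_map_eq_zero' := fun x hx => by
        have : ∀ g : G, |x.coeff g| = 0 := by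
          intro g
          have := (Finset.sum_eq_zero_iff_of_nonneg (fun g _ => abs_nonneg (x.coeff g))).mp hx
          exact this g (Finset.mem_univ g)
        ext g
        simpa using abs_eq_zero.mp (this g) }

lemma norm_def (x : A G) : ‖x‖ = ∑ g : G, |x.coeff g| := rfl

noncomputable instance : NormedRing (A G) :=
  { (inferInstance : NormedAddCommGroup (A G)), (inferInstance : Ring (A G)) with
    dist_eq := fun x y => rfl
    norm_mul_le := fun f g => by
      rw [norm_def, norm_def, norm_def, Finset.sum_mul]
      calc ∑ x : G, |(f * g).coeff x| ≤ ∑ x : G, ∑ h : G, |f.coeff h| * |g.coeff (h⁻¹ * x)| := by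
            refine Finset.sum_le_sum fun x _ => ?_
            rw [mul_apply']
            refine (Finset.abs_sum_le_sum_abs _ _).trans ?_
            exact le_of_eq (Finset.sum_congr rfl fun h _ => abs_mul _ _)
        _ = ∑ h : G, ∑ x : G, |f.coeff h| * |g.coeff (h⁻¹ * x)| := Finset.sum_comm
        _ = ∑ h : G, |f.coeff h| * ∑ g' : G, |g.coeff g'| := by
            refine Finset.sum_congr rfl fun h _ => ?_
            rw [← Finset.mul_sum]
            congr 1
            exact Fintype.sum_equiv (Equiv.mulLeft h⁻¹) _ _ fun x => rfl }

noncomputable instance : NormedAlgebra ℝ (A G) :=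
  { (inferInstance : Algebra ℝ (A G)) with
    norm_smul_le := fun c x => by
      rw [norm_def, norm_def, Finset.mul_sum]
      refine le_of_eq (Finset.sum_congr rfl fun g _ => ?_)
      show |c * x.coeff g| = |c| * |x.coeff g|; rw [abs_mul] }

/-- linear equiv with functions -/
noncomputable def L : (G → ℝ) ≃ₗ[ℝ] A G := (Finsupp.linearEquivFunOnFinite ℝ ℝ G).symm.trans (MonoidAlgebra.coeffLinearEquiv ℝ).symm

instance : FiniteDimensional ℝ (A G) := Module.Finite.equiv (L (G := G))

noncomputable def Lc : (G → ℝ) ≃L[ℝ] A G := (L (G := G)).toContinuousLinearEquiv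

lemma Lc_apply (x : G → ℝ) : Lc x = MonoidAlgebra.ofCoeff (Finsupp.equivFunOnFinite.symm x) := rfl

lemma Lc_apply_fun (x : G → ℝ) (g : G) : (Lc x : A G).coeff g = x g := rfl

lemma Lc_symm_apply (y : A G) : (Lc (G := G)).symm y = fun g => y.coeff g := rfl

/-- convolution with the uniform measure -/
lemma eta_mul (ν : G → ℝ) :
    (Lc (fun _ => (Fintype.card G : ℝ)⁻¹) : A G) * Lc ν
      = (∑ g : G, ν g) • Lc (fun _ => (Fintype.card G : ℝ)⁻¹) := by
  ext g
  rw [mul_apply']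
  show ∑ h : G, (Fintype.card G : ℝ)⁻¹ * ν (h⁻¹ * g) = (∑ g : G, ν g) * (Fintype.card G : ℝ)⁻¹
  rw [← Finset.mul_sum]
  rw [show (∑ i : G, ν (i⁻¹ * g)) = ∑ g : G, ν g from
    Fintype.sum_equiv ((Equiv.inv G).trans (Equiv.mulRight g)) _ ν (fun h => rfl)]
  ring

end Stmt17

end Aux

/-- Let `G` be a finite abelian group of order `n`, `t ∈ [0,1)`, and
`η = (1/n) Σ_g δ_g` the uniform probability (the main attractor, an idempotent). Then the map
`F : x ↦ (1-t) x (1 - tx)⁻¹` has a Fréchet derivative at `η` which acts as multiplication by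
the contraction factor `1 - t` on every tangent vector `ν` with `Σ_g ν(g) = 0`. -/
theorem frechet_derivative_at_uniform {G : Type*} [CommGroup G] [Fintype G]
    (t : ℝ) (ht : t ∈ Set.Ico (0 : ℝ) 1) :
    ∃ D : (G → ℝ) →L[ℝ] (G → ℝ),
      HasFDerivAt (F t) D (fun _ : G => ((Fintype.card G : ℝ))⁻¹) ∧
      ∀ ν : G → ℝ, ∑ g : G, ν g = 0 → D ν = (1 - t) • ν := by
  classical
  open Stmt17 ContinuousLinearMap in
  have h1t : (1 : ℝ) - t ≠ 0 := by have := ht.2; intro h; linarith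
  set ηf : G → ℝ := fun _ => ((Fintype.card G : ℝ))⁻¹ with hηf
  set η₀ : A G := Lc ηf with hη₀
  have hcard : (Fintype.card G : ℝ) ≠ 0 := by
    exact_mod_cast (Fintype.card_pos).ne'
  have hsum : ∑ g : G, ηf g = 1 := by
    simp [hηf, Finset.sum_const, mul_inv_cancel₀ hcard]
  have hidem : η₀ * η₀ = η₀ := by
    rw [hη₀, eta_mul, hsum, one_smul]
  set c : ℝ := t / (1 - t) with hc
  set w : A G := 1 + c • η₀ with hwdef
  have hscal : c - t - t * c = 0 := by rw [hc]; field_simp; ring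
  have hwmul : (1 - t • η₀) * w = 1 := by
    have hmap : (algebraMap ℝ (A G)) c - (algebraMap ℝ (A G)) t
        - (algebraMap ℝ (A G)) t * (algebraMap ℝ (A G)) c = 0 := by
      rw [← map_mul, ← map_sub, ← map_sub, hscal, map_zero]
    rw [hwdef, Algebra.smul_def, Algebra.smul_def]
    linear_combination (-((algebraMap ℝ (A G)) t * (algebraMap ℝ (A G)) c)) * hidem
      + η₀ * hmap
  set u : (A G)ˣ := ⟨1 - t • η₀, w, hwmul, by rw [mul_comm]; exact hwmul⟩ with hu
  -- derivative in the algebra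
  have h2 : HasFDerivAt (fun y : A G => 1 - t • y)
      (-(t • (ContinuousLinearMap.id ℝ (A G)))) η₀ :=
    ((hasFDerivAt_id η₀).const_smul t).const_sub 1
  have h3 : HasFDerivAt (fun y : A G => Ring.inverse (1 - t • y))
      ((-(mulLeftRight ℝ (A G) ↑u⁻¹ ↑u⁻¹)).comp (-(t • (ContinuousLinearMap.id ℝ (A G))))) η₀ :=
    by
      have hinvd : HasFDerivAt Ring.inverse (-(mulLeftRight ℝ (A G) ↑u⁻¹ ↑u⁻¹)) (1 - t • η₀) :=
        hasFDerivAt_ringInverse (𝕜 := ℝ) u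
      exact HasFDerivAt.comp η₀ hinvd h2
  have h4 := (hasFDerivAt_id η₀).mul' h3
  have h5 := h4.const_smul (1 - t)
  set DH := ((1 - t) • (η₀ • ((-(mulLeftRight ℝ (A G) ↑u⁻¹ ↑u⁻¹)).comp
      (-(t • (ContinuousLinearMap.id ℝ (A G)))))
      + (ContinuousLinearMap.id ℝ (A G)).smulRight (Ring.inverse (1 - t • η₀)))) with hDH
  set D : (G → ℝ) →L[ℝ] (G → ℝ) :=
    ((Lc (G := G)).symm : A G →L[ℝ] (G → ℝ)).comp
      (DH.comp ((Lc (G := G)) : (G → ℝ) →L[ℝ] A G)) with hD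
  refine ⟨D, ?_, ?_⟩
  · have hcomp := (((Lc (G := G)).symm : A G →L[ℝ] (G → ℝ)).hasFDerivAt).comp ηf
      (h5.comp ηf (((Lc (G := G)) : (G → ℝ) →L[ℝ] A G).hasFDerivAt))
    exact hcomp
  · intro ν hν
    set ν₀ : A G := Lc ν with hν₀
    have h0 : η₀ * ν₀ = 0 := by
      rw [hη₀, hν₀, eta_mul, hν, zero_smul]
    have hinv : Ring.inverse (1 - t • η₀) = w := by
      have : Ring.inverse ((u : A G)) = ↑u⁻¹ := Ring.inverse_unit u
      simpa [hu] using this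
    have hval : DH ν₀ = (1 - t) • ν₀ := by
      have expand : DH ν₀
          = (1 - t) • (η₀ * (w * (t • ν₀) * w) + ν₀ * w) := by
        simp only [hDH, ContinuousLinearMap.smul_apply, ContinuousLinearMap.add_apply,
          ContinuousLinearMap.comp_apply, ContinuousLinearMap.neg_apply,
          ContinuousLinearMap.coe_id', id_eq, ContinuousLinearMap.smulRight_apply,
          ContinuousLinearMap.id_apply, mulLeftRight_apply, hinv]
        rw [smul_eq_mul, smul_eq_mul]
        show (1 - t) • (η₀ * -((w : A G) * -(t • ν₀) * w) + ν₀ * w) = _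
        congr 1
        congr 1
        simp only [mul_neg, neg_mul, neg_neg]
      rw [expand]
      have e1 : η₀ * (w * (t • ν₀) * w) = 0 := by
        rw [Algebra.smul_def]
        calc η₀ * (w * ((algebraMap ℝ (A G)) t * ν₀) * w)
            = ((algebraMap ℝ (A G)) t * w * w) * (η₀ * ν₀) := by ring
          _ = 0 := by rw [h0, mul_zero]
      have e2 : ν₀ * w = ν₀ := by
        rw [hwdef, Algebra.smul_def]
        calc ν₀ * (1 + (algebraMap ℝ (A G)) c * η₀)
            = ν₀ + (algebraMap ℝ (A G)) c * (η₀ * ν₀) := by ring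
          _ = ν₀ := by rw [h0, mul_zero, add_zero]
      rw [e1, e2, zero_add]
    have : D ν = (Lc (G := G)).symm (DH ν₀) := rfl
    rw [this, hval, map_smul, hν₀, (Lc (G := G)).symm_apply_apply ν]
end
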